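/- Let $\mu_1, \ldots, \mu_K$ be non-atomic probability measures on $\mathbb{R}$ with finite $q$-th moments for some $q \in [1,\infty)$, let $\boldsymbol{w} \in \Delta^{K-1}$, and define $\nu^*$ via its quantile function $F^{-1}_{\nu^*}(t) \in \arg\min_{y \in \mathbb{R}} \sum_{s=1}^K w_s |F^{-1}_{\mu_s}(t) - y|^q$ for $t \in (0,1)$ (taking a measurable monotone selection). Then $\nu^*$ is a minimizer of $\nu \mapsto \sum_{s=1}^K w_s \mathsf{W}_q^q(\mu_s, \nu)$ over $\mathcal{P}_q(\mathbb{R})$, and $\nu^* \in \mathcal{P}_q(\mathbb{R})$. -/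

import Mathlib

open MeasureTheory

/-- The quantile function `F⁻¹_μ(t) = inf {x : t ≤ F_μ(x)}` of a measure on `ℝ`. -/
noncomputable def quantileFn (μ : Measure ℝ) (t : ℝ) : ℝ :=
  sInf {x : ℝ | t ≤ (μ (Set.Iic x)).toReal}

section Aux

variable (μ : Measure ℝ) [IsProbabilityMeasure μ]

open ProbabilityTheory Set Filter Topology

lemma quantileFn_eq_cdf (t : ℝ) :
    quantileFn μ t = sInf {x : ℝ | t ≤ cdf μ x} := by
  unfold quantileFn
  congr 1
  ext x
  rw [Set.mem_setOf_eq, Set.mem_setOf_eq, cdf_eq_real, measureReal_def]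

lemma bddBelow_cdf_set {t : ℝ} (ht : 0 < t) : BddBelow {x : ℝ | t ≤ cdf μ x} := by
  obtain ⟨x₀, hx₀⟩ := (Filter.eventually_atBot).mp
    ((tendsto_cdf_atBot μ).eventually_lt_const ht)
  refine ⟨x₀, fun x hx => ?_⟩
  by_contra h
  exact absurd hx (not_le.mpr (hx₀ x (le_of_not_ge h)))

lemma nonempty_cdf_set {t : ℝ} (ht : t < 1) : {x : ℝ | t ≤ cdf μ x}.Nonempty := by
  obtain ⟨x₀, hx₀⟩ := (Filter.eventually_atTop).mp
    ((tendsto_cdf_atTop μ).eventually_const_lt ht)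
  exact ⟨x₀, (hx₀ x₀ le_rfl).le⟩

lemma quantileFn_le_iff {t x : ℝ} (ht : t ∈ Set.Ioo (0:ℝ) 1) :
    quantileFn μ t ≤ x ↔ t ≤ cdf μ x := by
  rw [quantileFn_eq_cdf]
  set S := {x : ℝ | t ≤ cdf μ x} with hS
  have hbdd : BddBelow S := bddBelow_cdf_set μ ht.1
  have hne : S.Nonempty := nonempty_cdf_set μ ht.2
  constructor
  · intro h
    have key : ∀ y ∈ Set.Ioi (sInf S), t ≤ cdf μ y := by
      intro y hy
      obtain ⟨s, hsS, hs⟩ := (csInf_lt_iff hbdd hne).mp hy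
      exact hsS.trans (monotone_cdf μ hs.le)
    have htend : Tendsto (cdf μ) (𝓝[>] (sInf S)) (𝓝 (cdf μ (sInf S))) :=
      ((cdf μ).right_continuous (sInf S)).mono_left
        (nhdsWithin_mono _ Set.Ioi_subset_Ici_self)
    have h1 : t ≤ cdf μ (sInf S) :=
      ge_of_tendsto htend (eventually_mem_nhdsWithin.mono fun y hy => key y hy)
    exact h1.trans (monotone_cdf μ h)
  · intro h
    exact csInf_le hbdd h

lemma monotoneOn_quantileFn : MonotoneOn (quantileFn μ) (Set.Ioo (0:ℝ) 1) := by
  intro t₁ ht₁ t₂ ht₂ h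
  rw [quantileFn_eq_cdf, quantileFn_eq_cdf]
  exact csInf_le_csInf (bddBelow_cdf_set μ ht₁.1) (nonempty_cdf_set μ ht₂.2)
    (fun x hx => le_trans h hx)

lemma aemeasurable_quantileFn :
    AEMeasurable (quantileFn μ) (volume.restrict (Set.Ioo (0:ℝ) 1)) :=
  aemeasurable_restrict_of_monotoneOn measurableSet_Ioo (monotoneOn_quantileFn μ)

lemma map_quantileFn :
    Measure.map (quantileFn μ) (volume.restrict (Set.Ioo (0:ℝ) 1)) = μ := by
  have hae := aemeasurable_quantileFn μ
  haveI : IsProbabilityMeasure (volume.restrict (Set.Ioo (0:ℝ) 1)) :=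
    ⟨by simp [Real.volume_Ioo]⟩
  haveI : IsProbabilityMeasure
      (Measure.map (quantileFn μ) (volume.restrict (Set.Ioo (0:ℝ) 1))) :=
    Measure.isProbabilityMeasure_map hae
  refine Measure.ext_of_Iic _ μ (fun x => ?_)
  rw [Measure.map_apply_of_aemeasurable hae measurableSet_Iic,
    Measure.restrict_apply' measurableSet_Ioo]
  have hset : quantileFn μ ⁻¹' Set.Iic x ∩ Set.Ioo 0 1
      = Set.Iic (cdf μ x) ∩ Set.Ioo 0 1 := by
    ext t
    simp only [Set.mem_inter_iff, Set.mem_preimage, Set.mem_Iic]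
    constructor
    · rintro ⟨h1, h2⟩; exact ⟨(quantileFn_le_iff μ h2).mp h1, h2⟩
    · rintro ⟨h1, h2⟩; exact ⟨(quantileFn_le_iff μ h2).mpr h1, h2⟩
  rw [hset]
  have h0 : 0 ≤ cdf μ x := cdf_nonneg μ x
  have h1 : cdf μ x ≤ 1 := cdf_le_one μ x
  rcases eq_or_lt_of_le h1 with heq | hlt
  · have : Set.Iic (cdf μ x) ∩ Set.Ioo (0:ℝ) 1 = Set.Ioo 0 1 := by
      ext t
      simp only [Set.mem_inter_iff, Set.mem_Iic, Set.mem_Ioo]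
      constructor
      · rintro ⟨_, h⟩; exact h
      · rintro ⟨ht0, ht1⟩; exact ⟨by linarith, ht0, ht1⟩
    rw [this, Real.volume_Ioo, ← ofReal_cdf μ x, ← heq]
    norm_num
  · have : Set.Iic (cdf μ x) ∩ Set.Ioo (0:ℝ) 1 = Set.Ioc 0 (cdf μ x) := by
      ext t
      simp only [Set.mem_inter_iff, Set.mem_Iic, Set.mem_Ioo, Set.mem_Ioc]
      constructor
      · rintro ⟨h, ht0, _⟩; exact ⟨ht0, h⟩
      · rintro ⟨ht0, h⟩; exact ⟨h, ht0, by linarith⟩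
    rw [this, Real.volume_Ioc, sub_zero, ofReal_cdf μ x]

lemma integrable_quantileFn_rpow {q : ℝ}
    (h : Integrable (fun x => |x| ^ q) μ) :
    Integrable (fun t => |quantileFn μ t| ^ q) (volume.restrict (Set.Ioo (0:ℝ) 1)) := by
  have hg : Measurable fun x : ℝ => |x| ^ q := by fun_prop
  have := (integrable_map_measure hg.aestronglyMeasurable
    (aemeasurable_quantileFn μ)).mp (by rw [map_quantileFn μ]; exact h)
  simpa [Function.comp_def] using this

end Aux

lemma rpow_le_two_rpow {u v w q : ℝ} (hu : 0 ≤ u) (hv : 0 ≤ v) (hw : 0 ≤ w)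
    (h : u ≤ v + w) (hq : 0 ≤ q) : u ^ q ≤ 2 ^ q * (v ^ q + w ^ q) := by
  have h2 : u ≤ 2 * max v w := by
    have := max_le_max (le_max_left v w) (le_max_right w v)
    calc u ≤ v + w := h
    _ ≤ max v w + max v w := add_le_add (le_max_left v w) (le_max_right v w)
    _ = 2 * max v w := by ring
  have hmax : (0:ℝ) ≤ max v w := le_trans hv (le_max_left v w)
  calc u ^ q ≤ (2 * max v w) ^ q := Real.rpow_le_rpow hu h2 hq
    _ = 2 ^ q * (max v w) ^ q := Real.mul_rpow (by norm_num) hmax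
    _ ≤ 2 ^ q * (v ^ q + w ^ q) := by
        gcongr 2 ^ q * ?_
        rcases max_cases v w with ⟨he, _⟩ | ⟨he, _⟩ <;> rw [he]
        · exact le_add_of_nonneg_right (Real.rpow_nonneg hw q)
        · exact le_add_of_nonneg_left (Real.rpow_nonneg hv q)

lemma abs_sub_rpow_le {a b q : ℝ} (hq : 0 ≤ q) :
    |a - b| ^ q ≤ 2 ^ q * (|a| ^ q + |b| ^ q) :=
  rpow_le_two_rpow (abs_nonneg _) (abs_nonneg _) (abs_nonneg _) (abs_sub a b) hq

/-- One-dimensional Wasserstein-`q` barycenter: if the quantile function of `ν*` is a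
(monotone, measurable) pointwise minimizer `Q(t)` of `y ↦ ∑ w_s |F⁻¹_{μ_s}(t) - y|^q`,
then `ν* = Q # Unif(0,1)` has finite `q`-th moment and minimizes
`ν ↦ ∑ w_s W_q^q(μ_s, ν) = ∑ w_s ∫₀¹ |F⁻¹_{μ_s} - F⁻¹_ν|^q` over `P_q(ℝ)`. -/
theorem wasserstein_q_barycenter_quantile
    (K : ℕ) (q : ℝ) (hq : 1 ≤ q)
    (μ : Fin K → Measure ℝ) (hprob : ∀ s, IsProbabilityMeasure (μ s))
    (hatomless : ∀ s (x : ℝ), μ s {x} = 0)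
    (hmom : ∀ s, Integrable (fun x => |x| ^ q) (μ s))
    (w : Fin K → ℝ) (hw_nonneg : ∀ s, 0 ≤ w s) (hw_sum : ∑ s, w s = 1)
    (Q : ℝ → ℝ) (hQ_meas : Measurable Q) (hQ_mono : MonotoneOn Q (Set.Ioo 0 1))
    (hQ_min : ∀ t ∈ Set.Ioo (0 : ℝ) 1, ∀ y : ℝ,
      ∑ s, w s * |quantileFn (μ s) t - Q t| ^ q ≤
        ∑ s, w s * |quantileFn (μ s) t - y| ^ q) :
    Integrable (fun x => |x| ^ q)
      (Measure.map Q (volume.restrict (Set.Ioo (0 : ℝ) 1))) ∧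
    ∀ ν : Measure ℝ, IsProbabilityMeasure ν →
      Integrable (fun x => |x| ^ q) ν →
      ∑ s, w s * ∫ t in Set.Ioo (0 : ℝ) 1, |quantileFn (μ s) t - Q t| ^ q ≤
        ∑ s, w s * ∫ t in Set.Ioo (0 : ℝ) 1,
          |quantileFn (μ s) t - quantileFn ν t| ^ q := by
  haveI := hprob
  have hq0 : (0:ℝ) ≤ q := by linarith
  have hf_ae : ∀ s, AEMeasurable (quantileFn (μ s))
      (volume.restrict (Set.Ioo (0:ℝ) 1)) := fun s => aemeasurable_quantileFn (μ s)
  have hG : ∀ s, Integrable (fun t => |quantileFn (μ s) t| ^ q)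
      (volume.restrict (Set.Ioo (0:ℝ) 1)) := fun s =>
    integrable_quantileFn_rpow (μ s) (hmom s)
  have hB : Integrable (fun t => ∑ s, w s * |quantileFn (μ s) t| ^ q)
      (volume.restrict (Set.Ioo (0:ℝ) 1)) :=
    integrable_finset_sum _ (fun s _ => ((hG s).const_mul (w s)))
  obtain ⟨s₀, hs₀⟩ : ∃ s, 0 < w s := by
    by_contra h
    push_neg at h
    have h2 : ∑ s, w s ≤ 0 := Finset.sum_nonpos (fun s _ => h s)
    rw [hw_sum] at h2; linarith
  have hQbound : ∀ t ∈ Set.Ioo (0:ℝ) 1,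
      |Q t| ^ q ≤ 2 ^ q * ((∑ s, w s * |quantileFn (μ s) t| ^ q) / w s₀
        + |quantileFn (μ s₀) t| ^ q) := by
    intro t ht
    have hmin0 := hQ_min t ht 0
    simp only [sub_zero] at hmin0
    have h1 : w s₀ * |quantileFn (μ s₀) t - Q t| ^ q
        ≤ ∑ s, w s * |quantileFn (μ s) t| ^ q :=
      le_trans (Finset.single_le_sum
        (f := fun s => w s * |quantileFn (μ s) t - Q t| ^ q)
        (fun s _ => mul_nonneg (hw_nonneg s) (Real.rpow_nonneg (abs_nonneg _) q))
        (Finset.mem_univ s₀)) hmin0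
    have h2 : |quantileFn (μ s₀) t - Q t| ^ q
        ≤ (∑ s, w s * |quantileFn (μ s) t| ^ q) / w s₀ := by
      rw [le_div_iff₀ hs₀]
      linarith [h1]
    have h3 : |Q t| ≤ |quantileFn (μ s₀) t - Q t| + |quantileFn (μ s₀) t| := by
      calc |Q t| = |(Q t - quantileFn (μ s₀) t) + quantileFn (μ s₀) t| := by ring_nf
        _ ≤ |Q t - quantileFn (μ s₀) t| + |quantileFn (μ s₀) t| := abs_add_le _ _
        _ = _ := by rw [abs_sub_comm]
    calc |Q t| ^ q
        ≤ 2 ^ q * (|quantileFn (μ s₀) t - Q t| ^ q + |quantileFn (μ s₀) t| ^ q) :=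
          rpow_le_two_rpow (abs_nonneg _) (abs_nonneg _) (abs_nonneg _) h3 hq0
      _ ≤ _ :=
          mul_le_mul_of_nonneg_left (add_le_add_left h2 _)
            (Real.rpow_nonneg (by norm_num) q)
  have hQint : Integrable (fun t => |Q t| ^ q) (volume.restrict (Set.Ioo (0:ℝ) 1)) := by
    refine Integrable.mono' (((hB.div_const (w s₀)).add (hG s₀)).const_mul (2 ^ q))
      (Measurable.aestronglyMeasurable (by fun_prop)) ?_
    filter_upwards [ae_restrict_mem measurableSet_Ioo] with t ht
    rw [Real.norm_eq_abs, abs_of_nonneg (Real.rpow_nonneg (abs_nonneg _) q)]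
    exact hQbound t ht
  constructor
  · rw [integrable_map_measure (Measurable.aestronglyMeasurable (by fun_prop))
      hQ_meas.aemeasurable]
    simpa [Function.comp_def] using hQint
  · intro ν hν hνmom
    haveI := hν
    have hgν : Integrable (fun t => |quantileFn ν t| ^ q)
        (volume.restrict (Set.Ioo (0:ℝ) 1)) := integrable_quantileFn_rpow ν hνmom
    have hνae : AEMeasurable (quantileFn ν) (volume.restrict (Set.Ioo (0:ℝ) 1)) :=
      aemeasurable_quantileFn ν
    have hint1 : ∀ s, Integrable (fun t => |quantileFn (μ s) t - Q t| ^ q)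
        (volume.restrict (Set.Ioo (0:ℝ) 1)) := by
      intro s
      have hm0 : Measurable fun x : ℝ => |x| ^ q := by fun_prop
      refine Integrable.mono' (((hG s).add hQint).const_mul (2 ^ q))
        (AEMeasurable.aestronglyMeasurable
          (hm0.comp_aemeasurable ((hf_ae s).sub hQ_meas.aemeasurable)))
        (ae_of_all _ fun t => ?_)
      rw [Real.norm_eq_abs, abs_of_nonneg (Real.rpow_nonneg (abs_nonneg _) q)]
      exact abs_sub_rpow_le hq0
    have hint2 : ∀ s, Integrable (fun t => |quantileFn (μ s) t - quantileFn ν t| ^ q)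
        (volume.restrict (Set.Ioo (0:ℝ) 1)) := by
      intro s
      have hm0 : Measurable fun x : ℝ => |x| ^ q := by fun_prop
      refine Integrable.mono' (((hG s).add hgν).const_mul (2 ^ q))
        (AEMeasurable.aestronglyMeasurable
          (hm0.comp_aemeasurable ((hf_ae s).sub hνae)))
        (ae_of_all _ fun t => ?_)
      rw [Real.norm_eq_abs, abs_of_nonneg (Real.rpow_nonneg (abs_nonneg _) q)]
      exact abs_sub_rpow_le hq0
    have lhs_eq : ∑ s, w s * ∫ t in Set.Ioo (0:ℝ) 1, |quantileFn (μ s) t - Q t| ^ q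
        = ∫ t in Set.Ioo (0:ℝ) 1, ∑ s, w s * |quantileFn (μ s) t - Q t| ^ q := by
      rw [integral_finset_sum _ (fun s _ => (hint1 s).const_mul (w s))]
      exact Finset.sum_congr rfl (fun s _ => (integral_const_mul _ _).symm)
    have rhs_eq : ∑ s, w s * ∫ t in Set.Ioo (0:ℝ) 1,
          |quantileFn (μ s) t - quantileFn ν t| ^ q
        = ∫ t in Set.Ioo (0:ℝ) 1, ∑ s, w s * |quantileFn (μ s) t - quantileFn ν t| ^ q := by
      rw [integral_finset_sum _ (fun s _ => (hint2 s).const_mul (w s))]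
      exact Finset.sum_congr rfl (fun s _ => (integral_const_mul _ _).symm)
    rw [lhs_eq, rhs_eq]
    refine integral_mono_ae
      (integrable_finset_sum _ fun s _ => (hint1 s).const_mul (w s))
      (integrable_finset_sum _ fun s _ => (hint2 s).const_mul (w s)) ?_
    filter_upwards [ae_restrict_mem measurableSet_Ioo] with t ht
    exact hQ_min t ht (quantileFn ν t)
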